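/- arXiv:2311.15169 — 12 statements merged into one kernel-verified Lean document; each statement's English description precedes it below -/
import Mathlib

section
/- Let A be an n×n matrix over a commutative ring, and let i<j and k<l be row and column indices. Then det(A^{i;k})·det(A^{j;l}) − det(A^{i;l})·det(A^{j;k}) = det(A)·det(A^{i,j;k,l}), where A^{I;J} denotes A with rows in I and columns in J deleted (Sylvester's determinantal identity, 2×2 case). -/
open Matrix Polynomial Equiv

namespace SylvesterAux

variable {R : Type*} [CommRing R] {m : Type*} [Fintype m] [DecidableEq m]

theorem auxA (M : Matrix (Fin 2 ⊕ m) (Fin 2 ⊕ m) R) :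
    M.det * (M.adjugate.toBlocks₁₁).det = M.det ^ 2 * (M.toBlocks₂₂).det := by
  set X := M.adjugate.toBlocks₁₁
  set Y := M.adjugate.toBlocks₂₁
  have hadj := mul_adjugate M
  rw [← fromBlocks_toBlocks M.adjugate] at hadj
  conv at hadj => lhs; rw [← fromBlocks_toBlocks M]
  rw [fromBlocks_multiply] at hadj
  have hsmul : (M.det • (1 : Matrix (Fin 2 ⊕ m) (Fin 2 ⊕ m) R)) =
      fromBlocks (M.det • 1) 0 0 (M.det • 1) := by
    rw [← fromBlocks_one, fromBlocks_smul, smul_zero, smul_zero]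
  rw [hsmul] at hadj
  have h11 : M.toBlocks₁₁ * X + M.toBlocks₁₂ * Y = M.det • 1 := by
    have := congrArg toBlocks₁₁ hadj
    simpa [fromBlocks_toBlocks] using this
  have h21 : M.toBlocks₂₁ * X + M.toBlocks₂₂ * Y = 0 := by
    have := congrArg toBlocks₂₁ hadj
    simpa [fromBlocks_toBlocks] using this
  have key : M * fromBlocks X 0 Y 1 =
      fromBlocks (M.det • 1) M.toBlocks₁₂ 0 M.toBlocks₂₂ := by
    conv_lhs => rw [← fromBlocks_toBlocks M]
    rw [fromBlocks_multiply]
    rw [h11, h21]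
    congr 1 <;> simp
  have hdet := congrArg det key
  rw [det_mul, det_fromBlocks_zero₁₂, det_fromBlocks_zero₂₁, det_one, mul_one,
    det_smul, det_one, mul_one] at hdet
  rw [hdet]
  simp [Fintype.card_fin]

theorem auxB (M : Matrix (Fin 2 ⊕ m) (Fin 2 ⊕ m) R) :
    (M.adjugate.toBlocks₁₁).det = M.det * (M.toBlocks₂₂).det := by
  let g : Matrix (Fin 2 ⊕ m) (Fin 2 ⊕ m) R → Matrix (Fin 2 ⊕ m) (Fin 2 ⊕ m) R[X] := fun N =>
    N.map Polynomial.C + (Polynomial.X : R[X]) • (1 : Matrix (Fin 2 ⊕ m) (Fin 2 ⊕ m) R[X])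
  have hmonic : ((g M).det).Monic := by
    rw [Polynomial.Monic.def, ← Polynomial.leadingCoeff_det_X_one_add_C M, add_comm]
  have hreg : IsLeftRegular ((g M).det) := hmonic.isRegular.left
  have hgen : (g M).adjugate.toBlocks₁₁.det = (g M).det * ((g M).toBlocks₂₂).det := by
    apply hreg
    show (g M).det * _ = (g M).det * _
    rw [auxA (g M)]
    ring
  have hev := congrArg (Polynomial.evalRingHom (0 : R)) hgen
  have hmap : ((g M).map (Polynomial.evalRingHom (0 : R))) = M := by
    ext p q
    simp [g, Matrix.one_apply, apply_ite]
  have hblock : ∀ N : Matrix (Fin 2 ⊕ m) (Fin 2 ⊕ m) R[X],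
      (N.toBlocks₂₂).map (Polynomial.evalRingHom (0:R)) = (N.map (Polynomial.evalRingHom (0:R))).toBlocks₂₂ := by
    intro N; ext p q; simp [toBlocks₂₂]
  have hblock11 : ∀ N : Matrix (Fin 2 ⊕ m) (Fin 2 ⊕ m) R[X],
      (N.toBlocks₁₁).map (Polynomial.evalRingHom (0:R)) = (N.map (Polynomial.evalRingHom (0:R))).toBlocks₁₁ := by
    intro N; ext p q; simp [toBlocks₁₁]
  rw [_root_.map_mul, RingHom.map_det, RingHom.map_det, RingHom.map_det,
    RingHom.mapMatrix_apply, RingHom.mapMatrix_apply, RingHom.mapMatrix_apply,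
    hblock11, hblock, hmap] at hev
  rwa [show (g M).adjugate.map ⇑(evalRingHom (0:R)) = M.adjugate by
    rw [← RingHom.mapMatrix_apply, RingHom.map_adjugate, RingHom.mapMatrix_apply, hmap]] at hev

theorem det_two_perm {p : ℕ} (M : Matrix (Fin p) (Fin p) R) (e f : Equiv.Perm (Fin p)) :
    (M.submatrix ⇑e ⇑f).det
      = ((Equiv.Perm.sign e : ℤ) : R) * (((Equiv.Perm.sign f : ℤ) : R) * M.det) := by
  have h : M.submatrix ⇑e ⇑f = (M.submatrix id ⇑f).submatrix ⇑e id := by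
    rw [submatrix_submatrix]
    rfl
  rw [h, Matrix.det_permute, Matrix.det_permute']
  try push_cast
  try ring

theorem sgn_cyc {p : ℕ} (a : Fin (p + 1)) :
    ((Equiv.Perm.sign (Fin.cycleRange a).symm : ℤ) : R) = (-1 : R) ^ (a : ℕ) := by
  rw [Equiv.Perm.sign_symm, Fin.sign_cycleRange]
  try push_cast
  try ring

lemma succAbove_comm' {n : ℕ} (i j : Fin (n+2)) (hij : i < j) (hj : j ≠ 0)
    (hi : i ≠ Fin.last (n+1)) (m : Fin n) :
    i.succAbove ((j.pred hj).succAbove m) = j.succAbove ((i.castPred hi).succAbove m) := by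
  have h1 : (i:ℕ) < (j:ℕ) := hij
  have h2 : (j:ℕ) < n + 2 := j.isLt
  simp only [Fin.succAbove]
  split_ifs with h3 h4 h5 h6 h7 h8 <;>
    (apply Fin.ext;
     simp only [Fin.lt_def, Fin.coe_castSucc, Fin.val_succ, Fin.coe_pred,
      Fin.coe_castPred] at *)
  all_goals omega

theorem corner {n : ℕ} (B : Matrix (Fin (n + 2)) (Fin (n + 2)) R) :
    (B.submatrix ((0 : Fin (n+2)).succAbove) ((0 : Fin (n+2)).succAbove)).det *
      (B.submatrix ((1 : Fin (n+2)).succAbove) ((1 : Fin (n+2)).succAbove)).det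
    - (B.submatrix ((1 : Fin (n+2)).succAbove) ((0 : Fin (n+2)).succAbove)).det *
      (B.submatrix ((0 : Fin (n+2)).succAbove) ((1 : Fin (n+2)).succAbove)).det
    = B.det * (B.submatrix (Fin.succ ∘ Fin.succ) (Fin.succ ∘ Fin.succ)).det := by
  let ε : Fin 2 ⊕ Fin n ≃ Fin (n + 2) := finSumFinEquiv.trans (finCongr (by omega))
  have hε0 : ε (Sum.inl 0) = 0 := rfl
  have hε1 : ε (Sum.inl 1) = 1 := rfl
  have hεr : ∀ p : Fin n, ε (Sum.inr p) = p.succ.succ := by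
    intro p
    apply Fin.ext
    simp [ε, finSumFinEquiv]
    try omega
  have h := auxB (M := (B.submatrix ε ε : Matrix (Fin 2 ⊕ Fin n) (Fin 2 ⊕ Fin n) R))
  rw [adjugate_submatrix_equiv_self] at h
  have hdet : (B.submatrix ε ε).det = B.det := det_submatrix_equiv_self ε B
  have h22 : ((B.submatrix ε ε).toBlocks₂₂ : Matrix (Fin n) (Fin n) R)
      = B.submatrix (Fin.succ ∘ Fin.succ) (Fin.succ ∘ Fin.succ) := by
    ext p q
    simp [toBlocks₂₂, hεr]
  rw [hdet, h22] at h
  rw [det_fin_two] at h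
  simp only [toBlocks₁₁, of_apply, submatrix_apply, hε0, hε1] at h
  rw [adjugate_fin_succ_eq_det_submatrix, adjugate_fin_succ_eq_det_submatrix,
    adjugate_fin_succ_eq_det_submatrix, adjugate_fin_succ_eq_det_submatrix] at h
  simp only [Fin.val_zero, Fin.val_one, pow_zero, pow_one, pow_succ] at h
  rw [← h]
  ring

end SylvesterAux

open SylvesterAux Matrix Equiv

/-- Sylvester's determinantal identity (2×2 case): for an n×n matrix `A` over a
commutative ring and row indices `i < j`, column indices `k < l`,
`det A^{i;k} · det A^{j;l} − det A^{i;l} · det A^{j;k} = det A · det A^{i,j;k,l}`. -/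
theorem sylvester_two_by_two {R : Type*} [CommRing R] {n : ℕ}
    (A : Matrix (Fin (n + 2)) (Fin (n + 2)) R) (i j k l : Fin (n + 2))
    (hij : i < j) (hkl : k < l) :
    (A.submatrix i.succAbove k.succAbove).det * (A.submatrix j.succAbove l.succAbove).det
      - (A.submatrix i.succAbove l.succAbove).det * (A.submatrix j.succAbove k.succAbove).det
    = A.det *
      (A.submatrix
        (i.succAbove ∘ (j.pred (Fin.pos_iff_ne_zero.mp (lt_of_le_of_lt (Fin.zero_le i) hij))).succAbove)
        (k.succAbove ∘ (l.pred (Fin.pos_iff_ne_zero.mp (lt_of_le_of_lt (Fin.zero_le k) hkl))).succAbove)).det := by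
  have hj0 : j ≠ 0 := Fin.pos_iff_ne_zero.mp (lt_of_le_of_lt (Fin.zero_le i) hij)
  have hl0 : l ≠ 0 := Fin.pos_iff_ne_zero.mp (lt_of_le_of_lt (Fin.zero_le k) hkl)
  have hil : i ≠ Fin.last (n+1) := Fin.ne_last_of_lt hij
  have hkl' : k ≠ Fin.last (n+1) := Fin.ne_last_of_lt hkl
  set jp := j.pred hj0 with hjp
  set lp := l.pred hl0 with hlp
  set ip := i.castPred hil with hip
  set kp := k.castPred hkl' with hkp
  set ej : Equiv.Perm (Fin (n+1)) := (Fin.cycleRange jp).symm with hej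
  set el : Equiv.Perm (Fin (n+1)) := (Fin.cycleRange lp).symm with hel
  set ei : Equiv.Perm (Fin (n+1)) := (Fin.cycleRange ip).symm with hei
  set ek : Equiv.Perm (Fin (n+1)) := (Fin.cycleRange kp).symm with hek
  set ρ : Equiv.Perm (Fin (n+2)) :=
    (Fin.cycleRange i).symm * (Equiv.Perm.decomposeFin.symm (0, ej)) with hρ
  set σ : Equiv.Perm (Fin (n+2)) :=
    (Fin.cycleRange k).symm * (Equiv.Perm.decomposeFin.symm (0, el)) with hσ
  -- pointwise descriptions
  have hρs : ∀ x : Fin (n+1), ρ x.succ = i.succAbove (ej x) := by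
    intro x
    simp [hρ, Equiv.Perm.mul_apply, Equiv.Perm.decomposeFin_symm_apply_succ, Equiv.swap_self]
  have hρ0 : ρ 0 = i := by
    simp [hρ, Equiv.Perm.mul_apply, Equiv.Perm.decomposeFin_symm_apply_zero]
  have hσs : ∀ x : Fin (n+1), σ x.succ = k.succAbove (el x) := by
    intro x
    simp [hσ, Equiv.Perm.mul_apply, Equiv.Perm.decomposeFin_symm_apply_succ, Equiv.swap_self]
  have hσ0 : σ 0 = k := by
    simp [hσ, Equiv.Perm.mul_apply, Equiv.Perm.decomposeFin_symm_apply_zero]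
  have hone0 : (1 : Fin (n+2)).succAbove 0 = 0 := by
    rw [Fin.succAbove_of_castSucc_lt] <;> simp
  have hone : ∀ y : Fin n, (1 : Fin (n+2)).succAbove y.succ = y.succ.succ := by
    intro y
    rw [Fin.succAbove_of_le_castSucc]
    rw [Fin.le_castSucc_iff]
    exact Fin.one_lt_succ_succ y  -- maybe wrong name
  -- row composition facts
  have F1 : ⇑ρ ∘ Fin.succ = i.succAbove ∘ ⇑ej := funext hρs
  have G1 : ⇑σ ∘ Fin.succ = k.succAbove ∘ ⇑el := funext hσs
  have F3 : ⇑ρ ∘ (Fin.succ ∘ Fin.succ) = i.succAbove ∘ jp.succAbove := by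
    funext y
    simp only [Function.comp_apply, hρs, hej, Fin.cycleRange_symm_succ]
  have G3 : ⇑σ ∘ (Fin.succ ∘ Fin.succ) = k.succAbove ∘ lp.succAbove := by
    funext y
    simp only [Function.comp_apply, hσs, hel, Fin.cycleRange_symm_succ]
  have F2 : ⇑ρ ∘ (1 : Fin (n+2)).succAbove = j.succAbove ∘ ⇑ei := by
    funext x
    induction x using Fin.cases with
    | zero =>
        simp only [Function.comp_apply, hone0, hρ0, hei, Fin.cycleRange_symm_zero, hip]
        rw [Fin.succAbove_castPred_of_lt _ _ hij]
    | succ y =>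
        simp only [Function.comp_apply, hone, hρs, hej, hei,
          Fin.cycleRange_symm_succ]
        exact succAbove_comm' i j hij hj0 hil y
  have G2 : ⇑σ ∘ (1 : Fin (n+2)).succAbove = l.succAbove ∘ ⇑ek := by
    funext x
    induction x using Fin.cases with
    | zero =>
        simp only [Function.comp_apply, hone0, hσ0, hek, Fin.cycleRange_symm_zero, hkp]
        rw [Fin.succAbove_castPred_of_lt _ _ hkl]
    | succ y =>
        simp only [Function.comp_apply, hone, hσs, hel, hek,
          Fin.cycleRange_symm_succ]
        exact succAbove_comm' k l hkl hl0 hkl' y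
  -- the corner identity for the permuted matrix
  have hc := corner (A.submatrix ⇑ρ ⇑σ)
  rw [Fin.succAbove_zero] at hc
  rw [submatrix_submatrix, submatrix_submatrix, submatrix_submatrix, submatrix_submatrix,
    submatrix_submatrix, F1, G1, F2, G2, F3, G3] at hc
  rw [← submatrix_submatrix A i.succAbove k.succAbove ⇑ej ⇑el,
      ← submatrix_submatrix A j.succAbove l.succAbove ⇑ei ⇑ek,
      ← submatrix_submatrix A j.succAbove k.succAbove ⇑ei ⇑el,
      ← submatrix_submatrix A i.succAbove l.succAbove ⇑ej ⇑ek,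
      det_two_perm, det_two_perm, det_two_perm, det_two_perm,
      det_two_perm A ρ σ] at hc
  -- sign computations
  have s_ej : ((Equiv.Perm.sign ej : ℤ) : R) = (-1 : R) ^ (jp : ℕ) := by
    rw [hej]; exact sgn_cyc jp
  have s_el : ((Equiv.Perm.sign el : ℤ) : R) = (-1 : R) ^ (lp : ℕ) := by
    rw [hel]; exact sgn_cyc lp
  have s_ei : ((Equiv.Perm.sign ei : ℤ) : R) = (-1 : R) ^ (i : ℕ) := by
    rw [hei, sgn_cyc, show ((ip : ℕ)) = (i : ℕ) from rfl]
  have s_ek : ((Equiv.Perm.sign ek : ℤ) : R) = (-1 : R) ^ (k : ℕ) := by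
    rw [hek, sgn_cyc, show ((kp : ℕ)) = (k : ℕ) from rfl]
  have s_ρ : ((Equiv.Perm.sign ρ : ℤ) : R) = (-1 : R) ^ (i : ℕ) * (-1 : R) ^ (jp : ℕ) := by
    rw [hρ, _root_.map_mul, Equiv.Perm.decomposeFin.symm_sign, if_pos rfl, one_mul]
    push_cast
    rw [sgn_cyc, s_ej]
  have s_σ : ((Equiv.Perm.sign σ : ℤ) : R) = (-1 : R) ^ (k : ℕ) * (-1 : R) ^ (lp : ℕ) := by
    rw [hσ, _root_.map_mul, Equiv.Perm.decomposeFin.symm_sign, if_pos rfl, one_mul]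
    push_cast
    rw [sgn_cyc, s_el]
  rw [s_ej, s_el, s_ei, s_ek, s_ρ, s_σ] at hc
  set sI := (-1 : R) ^ (i : ℕ) with hsI
  set sJ := (-1 : R) ^ (jp : ℕ) with hsJ
  set sK := (-1 : R) ^ (k : ℕ) with hsK
  set sL := (-1 : R) ^ (lp : ℕ) with hsL
  have sq : ∀ m : ℕ, (-1 : R) ^ m * (-1 : R) ^ m = 1 := by
    intro m
    rw [← pow_add]
    exact Even.neg_one_pow ⟨m, rfl⟩
  have e1 : sI * sI = 1 := sq _
  have e2 : sJ * sJ = 1 := sq _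
  have e3 : sK * sK = 1 := sq _
  have e4 : sL * sL = 1 := sq _
  set a := (A.submatrix i.succAbove k.succAbove).det
  set b := (A.submatrix j.succAbove l.succAbove).det
  set c := (A.submatrix i.succAbove l.succAbove).det
  set d := (A.submatrix j.succAbove k.succAbove).det
  set D := A.det
  set S := (A.submatrix (i.succAbove ∘ jp.succAbove) (k.succAbove ∘ lp.succAbove)).det
  have h2 : (sI*sJ*sK*sL) * ((sI*sJ*sK*sL) * (a*b - c*d))
      = (sI*sJ*sK*sL) * ((sI*sJ*sK*sL) * (D*S)) := by
    linear_combination (sI*sJ*sK*sL) * hc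
  calc a*b - c*d = (sI*sI)*((sJ*sJ)*((sK*sK)*((sL*sL)*(a*b-c*d)))) := by
        rw [e1, e2, e3, e4]; ring
    _ = (sI*sJ*sK*sL) * ((sI*sJ*sK*sL) * (a*b-c*d)) := by ring
    _ = (sI*sJ*sK*sL) * ((sI*sJ*sK*sL) * (D*S)) := h2
    _ = (sI*sI)*((sJ*sJ)*((sK*sK)*((sL*sL)*(D*S)))) := by ring
    _ = D*S := by rw [e1, e2, e3, e4]; ring
end

section
/- Let A be an n×n matrix over a commutative ring such that rows u and v agree in all columns except possibly columns u and v (i.e., A_{u,w} = A_{v,w} for all w ∉ {u,v}), with u < v. Then det(A) = (A_{u,u} − A_{v,u})·det(A^{u;u}) + (−1)^{u+v}(A_{u,v} − A_{v,v})·det(A^{u;v}). -/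
/-- If rows `u` and `v` of `A` agree outside columns `u, v` (with `u < v`), then
`det A = (A u u − A v u)·det A^{u;u} + (−1)^{u+v}(A u v − A v v)·det A^{u;v}`. -/
theorem det_expand_two_agreeing_rows_u {R : Type*} [CommRing R] {n : ℕ}
    (A : Matrix (Fin (n + 1)) (Fin (n + 1)) R) (u v : Fin (n + 1)) (huv : u < v)
    (hrow : ∀ w, w ≠ u → w ≠ v → A u w = A v w) :
    A.det = (A u u - A v u) * (A.submatrix u.succAbove u.succAbove).det
      + (-1 : R) ^ ((u : ℕ) + (v : ℕ)) * (A u v - A v v) *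
        (A.submatrix u.succAbove v.succAbove).det := by
  classical
  set B := A.updateRow u (A u - A v) with hB
  have hA : A.det = B.det := by
    have h1 : A = A.updateRow u ((A u - A v) + A v) := by
      rw [sub_add_cancel, Matrix.updateRow_eq_self]
    have h2 : (A.updateRow u (A v)).det = 0 :=
      Matrix.det_zero_of_row_eq huv.ne (by simp [Matrix.updateRow_apply, huv.ne'])
    conv_lhs => rw [h1]
    rw [Matrix.det_updateRow_add, h2, add_zero]
  have hsub : ∀ j : Fin (n + 1), B.submatrix u.succAbove j.succAbove
      = A.submatrix u.succAbove j.succAbove := by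
    intro j
    ext i k
    simp [hB, Matrix.updateRow_apply, (Fin.succAbove_ne u i)]
  have hBu : ∀ w, w ≠ u → w ≠ v → B u w = 0 := by
    intro w hw1 hw2
    simp [hB, hrow w hw1 hw2]
  rw [hA, Matrix.det_succ_row B u]
  have hzero : ∀ j ∈ Finset.univ, j ∉ ({u, v} : Finset (Fin (n + 1))) →
      (-1 : R) ^ ((u : ℕ) + (j : ℕ)) * B u j
        * (B.submatrix u.succAbove j.succAbove).det = 0 := by
    intro j _ hj
    simp only [Finset.mem_insert, Finset.mem_singleton, not_or] at hj
    rw [hBu j hj.1 hj.2, mul_zero, zero_mul]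
  rw [← Finset.sum_subset (Finset.subset_univ ({u, v} : Finset (Fin (n + 1)))) hzero,
    Finset.sum_pair huv.ne]
  have h1 : B u u = A u u - A v u := by simp [hB]
  have h2 : B u v = A u v - A v v := by simp [hB, Matrix.updateRow_apply]
  rw [hsub, hsub, h1, h2]
  ring_nf
  rw [Even.neg_pow ⟨(u : ℕ), by ring⟩]
  ring
end

section
/- Let A be an n×n matrix over a commutative ring with rows u and v agreeing outside columns u,v (A_{u,w}=A_{v,w} for w∉{u,v}), u<v. Then det(A) = (−1)^{u+v}(A_{v,u} − A_{u,u})·det(A^{v;u}) + (A_{v,v} − A_{u,v})·det(A^{v;v}). -/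
open Matrix

/-- Row `v` is row `u` plus multiples of the unit vectors `e_u` and `e_v`; the row `u` part
contributes a determinant with two equal rows, and each unit vector contributes a cofactor. -/
theorem Matrix.det_eq_adjugate_of_rows_agree_outside {ι R : Type*} [Fintype ι] [DecidableEq ι]
    [CommRing R] (A : Matrix ι ι R) {u v : ι} (huv : u ≠ v)
    (hrow : ∀ w, w ≠ u → w ≠ v → A u w = A v w) :
    A.det = (A v u - A u u) * adjugate A u v + (A v v - A u v) * adjugate A v v := by
  have hAv : A v = A u + ((A v u - A u u) • Pi.single u 1 + (A v v - A u v) • Pi.single v 1) := by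
    funext w
    by_cases hwu : w = u
    · subst hwu; simp [huv.symm]
    by_cases hwv : w = v
    · subst hwv; simp [huv]
    simp [hwu, hwv, hrow w hwu hwv]
  conv_lhs => rw [← updateRow_eq_self A v, hAv]
  rw [det_updateRow_add, det_updateRow_eq_zero huv, det_updateRow_add, det_updateRow_smul,
    det_updateRow_smul, adjugate_apply, adjugate_apply, zero_add]

/-- If rows `u` and `v` of `A` agree outside columns `u, v` (with `u < v`), then
`det A = (−1)^{u+v}(A v u − A u u)·det A^{v;u} + (A v v − A u v)·det A^{v;v}`. -/
theorem det_expand_two_agreeing_rows_v {R : Type*} [CommRing R] {n : ℕ}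
    (A : Matrix (Fin (n + 1)) (Fin (n + 1)) R) (u v : Fin (n + 1)) (huv : u < v)
    (hrow : ∀ w, w ≠ u → w ≠ v → A u w = A v w) :
    A.det = (-1 : R) ^ ((u : ℕ) + (v : ℕ)) * (A v u - A u u) *
        (A.submatrix v.succAbove u.succAbove).det
      + (A v v - A u v) * (A.submatrix v.succAbove v.succAbove).det := by
  have hsign : (-1 : R) ^ ((v : ℕ) + (v : ℕ)) = 1 := by
    rw [← two_mul, pow_mul, neg_one_sq, one_pow]
  rw [A.det_eq_adjugate_of_rows_agree_outside huv.ne hrow, adjugate_fin_succ_eq_det_submatrix,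
    adjugate_fin_succ_eq_det_submatrix, hsign, Nat.add_comm (v : ℕ)]
  ring
end

section
/- Let A be an n×n matrix over a field with rows u,v (u<v) agreeing outside columns u,v, and let w ∉ {u,v}. Then (A_{u,u} − A_{v,u})·det(A^{w;u}) = (−1)^{u+v}(A_{v,v} − A_{u,v})·det(A^{w;v}). -/
/-!
Replace row `w` of `A` by the difference of rows `u` and `v`. By hypothesis this new row vanishes
outside columns `u` and `v`, and since `w ∉ {u, v}` its expansion against the cofactors of row `w`
is an expansion by alien cofactors, hence zero. The two surviving terms give the identity after
sorting out the signs `(-1) ^ (w + u)` and `(-1) ^ (w + v)`.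
-/

namespace Matrix

variable {ι R : Type*} [Fintype ι] [DecidableEq ι] [CommRing R]

theorem sum_mul_adjugate_apply_of_ne (A : Matrix ι ι R) {i k : ι} (hik : i ≠ k) :
    ∑ j, A i j * adjugate A j k = 0 := by
  rw [← mul_apply, mul_adjugate, smul_apply, one_apply_ne hik, smul_zero]

theorem mul_adjugate_add_mul_adjugate_eq_zero (A : Matrix ι ι R) {u v w : ι} (huv : u ≠ v)
    (hrow : ∀ x, x ≠ u → x ≠ v → A u x = A v x) (hwu : w ≠ u) (hwv : w ≠ v) :
    (A u u - A v u) * adjugate A u w + (A u v - A v v) * adjugate A v w = 0 := by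
  have hdiff : ∑ j, (A u j - A v j) * adjugate A j w = 0 := by
    simp only [sub_mul, Finset.sum_sub_distrib, sum_mul_adjugate_apply_of_ne A hwu.symm,
      sum_mul_adjugate_apply_of_ne A hwv.symm, sub_zero]
  rwa [Fintype.sum_eq_add u v huv fun x ⟨hxu, hxv⟩ => by rw [hrow x hxu hxv, sub_self, zero_mul]]
    at hdiff

end Matrix

theorem ratio_of_minors_general {K : Type*} [Field K] {n : ℕ}
    (A : Matrix (Fin (n + 1)) (Fin (n + 1)) K) (u v w : Fin (n + 1))
    (hrow : ∀ x, x ≠ u → x ≠ v → A u x = A v x) (hwu : w ≠ u) (hwv : w ≠ v) :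
    (A u u - A v u) * (A.submatrix w.succAbove u.succAbove).det
      = (-1 : K) ^ ((u : ℕ) + (v : ℕ)) * (A v v - A u v) *
        (A.submatrix w.succAbove v.succAbove).det := by
  rcases eq_or_ne u v with rfl | huv
  · simp
  have h := A.mul_adjugate_add_mul_adjugate_eq_zero huv hrow hwu hwv
  rw [Matrix.adjugate_fin_succ_eq_det_submatrix, Matrix.adjugate_fin_succ_eq_det_submatrix] at h
  have hss : (-1 : K) ^ ((w : ℕ) + u) * (-1) ^ ((w : ℕ) + u) = 1 := by
    rw [← mul_pow, neg_one_mul, neg_neg, one_pow]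
  have hst : (-1 : K) ^ ((w : ℕ) + u) * (-1) ^ ((w : ℕ) + v) = (-1) ^ ((u : ℕ) + v) := by
    rw [← pow_add, show (w : ℕ) + u + (w + v) = u + v + 2 * w by ring, pow_add, pow_mul,
      neg_one_sq, one_pow, mul_one]
  linear_combination (-1 : K) ^ ((w : ℕ) + u) * h
    - (A u u - A v u) * (A.submatrix w.succAbove u.succAbove).det * hss
    + (A v v - A u v) * (A.submatrix w.succAbove v.succAbove).det * hst

/-- Ratio of minors: if rows `u, v` of `A` agree outside columns `u, v` (`u < v`)
and `w ∉ {u, v}`, then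
`(A u u − A v u)·det A^{w;u} = (−1)^{u+v}(A v v − A u v)·det A^{w;v}`. -/
theorem ratio_of_minors {K : Type*} [Field K] {n : ℕ}
    (A : Matrix (Fin (n + 1)) (Fin (n + 1)) K) (u v w : Fin (n + 1)) (huv : u < v)
    (hrow : ∀ x, x ≠ u → x ≠ v → A u x = A v x) (hwu : w ≠ u) (hwv : w ≠ v) :
    (A u u - A v u) * (A.submatrix w.succAbove u.succAbove).det
      = (-1 : K) ^ ((u : ℕ) + (v : ℕ)) * (A v v - A u v) *
        (A.submatrix w.succAbove v.succAbove).det :=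
  ratio_of_minors_general A u v w hrow hwu hwv
end

section
/- Let x : ℝ → ℝ^n be a solution of the Lotka-Volterra system x_i' = x_i · (Σ_j A_{ij} x_j). For any two indices u ≠ v such that A_{u,w} = A_{v,w} for all w ∉ {u,v}, the function P = (A_{v,u} − A_{u,u})·x_u + (A_{v,v} − A_{u,v})·x_v satisfies P' = P · (A_{u,u}·x_u + A_{v,v}·x_v + Σ_{w∉{u,v}} A_{u,w}·x_w), i.e., P is a Darboux polynomial along the flow. -/
open Finset

/-!
Along the flow, `P' = (A v u − A u u) x_u L_u + (A v v − A u v) x_v L_v` with `L_i = Σ_j A_{ij} x_j`.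
Since rows `u` and `v` agree off the columns `u, v`, `L_u` and `L_v` share the tail
`S = Σ_{w ∉ {u,v}} A u w x_w`, and what remains is a polynomial identity in
`x_u, x_v, S` and the four entries of `A` on `{u, v}`.
-/

theorem Fintype.sum_eq_add_add_sum_compl_pair {ι M : Type*} [Fintype ι] [DecidableEq ι]
    [AddCommMonoid M] {u v : ι} (huv : u ≠ v) (f : ι → M) :
    ∑ i, f i = f u + f v + ∑ i ∈ ({u, v}ᶜ : Finset ι), f i := by
  rw [← sum_add_sum_compl {u, v}, sum_pair huv]

theorem sum_compl_pair_eq_of_rows_eq {ι R : Type*} [Fintype ι] [DecidableEq ι] [Semiring R]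
    (A : Matrix ι ι R) (y : ι → R) {u v : ι} (hrow : ∀ w, w ≠ u → w ≠ v → A u w = A v w) :
    ∑ w ∈ ({u, v}ᶜ : Finset ι), A v w * y w = ∑ w ∈ ({u, v}ᶜ : Finset ι), A u w * y w := by
  refine sum_congr rfl fun w hw => ?_
  simp only [mem_compl, mem_insert, mem_singleton, not_or] at hw
  rw [hrow w hw.1 hw.2]

theorem lotkaVolterra_darboux_identity {R : Type*} [CommRing R] (a b c d xu xv S : R) :
    (c - a) * (xu * (a * xu + b * xv + S)) + (d - b) * (xv * (c * xu + d * xv + S)) =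
      ((c - a) * xu + (d - b) * xv) * (a * xu + d * xv + S) := by
  ring

/-- Darboux polynomial for a Lotka-Volterra system: if `x` solves
`x_i' = x_i (Σ_j A_{ij} x_j)` and rows `u ≠ v` of `A` agree outside columns `u, v`,
then `P = (A v u − A u u) x_u + (A v v − A u v) x_v` satisfies
`P' = P (A u u·x_u + A v v·x_v + Σ_{w ∉ {u,v}} A u w·x_w)`. -/
theorem darboux_polynomial_LV {n : ℕ} (A : Matrix (Fin n) (Fin n) ℝ)
    (x : ℝ → Fin n → ℝ)
    (hx : ∀ i t, HasDerivAt (fun s => x s i) (x t i * ∑ j, A i j * x t j) t)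
    (u v : Fin n) (huv : u ≠ v)
    (hrow : ∀ w, w ≠ u → w ≠ v → A u w = A v w) (t : ℝ) :
    HasDerivAt (fun s => (A v u - A u u) * x s u + (A v v - A u v) * x s v)
      (((A v u - A u u) * x t u + (A v v - A u v) * x t v) *
        (A u u * x t u + A v v * x t v + ∑ w ∈ ({u, v}ᶜ : Finset (Fin n)), A u w * x t w))
      t := by
  have hP := ((hx u t).const_mul (A v u - A u u)).add ((hx v t).const_mul (A v v - A u v))
  refine hP.congr_deriv ?_
  rw [Fintype.sum_eq_add_add_sum_compl_pair huv, Fintype.sum_eq_add_add_sum_compl_pair huv,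
    sum_compl_pair_eq_of_rows_eq A (x t) hrow]
  exact lotkaVolterra_darboux_identity _ _ _ _ _ _ _
end

section
/- Let x be a solution of the homogeneous Lotka-Volterra system x_i' = x_i(Σ_j A_{ij}x_j), and let u < v with A_{u,w}=A_{v,w} for w∉{u,v}. Then the edge variable y = x_u/x_v satisfies y' = x_u·((A_{u,u} − A_{v,u})·y − A_{v,v} + A_{u,v}) on any interval where x_v is nonvanishing. -/
/-!
Both `x_u` and `x_v` satisfy `x_i' = x_i r_i` with rates `r_i = Σ_j A_{ij} x_j`, so the
quotient rule gives `(x_u / x_v)' = (x_u / x_v) (r_u - r_v)`. Since rows `u` and `v` of `A`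
agree outside columns `u` and `v`, the rate difference `r_u - r_v` only involves `x_u` and `x_v`.
-/

theorem Fintype.sum_mul_sub_sum_mul_of_eq_off_pair {ι R : Type*} [Fintype ι] [CommRing R]
    {a b : ι → R} (y : ι → R) {u v : ι} (huv : u ≠ v)
    (hab : ∀ w, w ≠ u → w ≠ v → a w = b w) :
    ∑ j, a j * y j - ∑ j, b j * y j = (a u - b u) * y u + (a v - b v) * y v := by
  calc ∑ j, a j * y j - ∑ j, b j * y j = ∑ j, (a j - b j) * y j := by
        rw [← Finset.sum_sub_distrib]
        simp only [sub_mul]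
    _ = (a u - b u) * y u + (a v - b v) * y v :=
        Fintype.sum_eq_add u v huv fun w ⟨hwu, hwv⟩ => by rw [hab w hwu hwv, sub_self, zero_mul]

theorem HasDerivAt.div_of_self_mul {𝕜 : Type*} [NontriviallyNormedField 𝕜] {f g : 𝕜 → 𝕜}
    {p q t : 𝕜}
    (hf : HasDerivAt f (f t * p) t) (hg : HasDerivAt g (g t * q) t) (hgt : g t ≠ 0) :
    HasDerivAt (fun r => f r / g r) (f t / g t * (p - q)) t := by
  refine (hf.div hg hgt).congr_deriv ?_
  field_simp

/-- Edge-variable equation: if `x` solves the LV system `x_i' = x_i (Σ_j A_{ij} x_j)`,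
rows `u < v` of `A` agree outside columns `u, v`, and `x_v` is nonvanishing on a
set `s`, then `y = x_u / x_v` satisfies
`y' = x_u ((A u u − A v u) y − A v v + A u v)` on `s`. -/
theorem edge_variable_ode {n : ℕ} (A : Matrix (Fin n) (Fin n) ℝ)
    (x : ℝ → Fin n → ℝ)
    (hx : ∀ i t, HasDerivAt (fun s => x s i) (x t i * ∑ j, A i j * x t j) t)
    (u v : Fin n) (huv : u < v)
    (hrow : ∀ w, w ≠ u → w ≠ v → A u w = A v w)
    (s : Set ℝ) (hs : ∀ t ∈ s, x t v ≠ 0) :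
    ∀ t ∈ s, HasDerivAt (fun r => x r u / x r v)
      (x t u * ((A u u - A v u) * (x t u / x t v) - A v v + A u v)) t := by
  intro t ht
  have hquot := (hx u t).div_of_self_mul (hx v t) (hs t ht)
  rw [Fintype.sum_mul_sub_sum_mul_of_eq_off_pair (x t) huv.ne hrow] at hquot
  refine hquot.congr_deriv ?_
  field_simp [hs t ht]
  ring
end

section
/- Let A be a real n×n matrix with det(A) ≠ 0, x a positive solution of x_i' = x_i(Ax)_i, and suppose P : ℝ → ℝ_{>0} is differentiable with P' = P·(b·x) for some row vector b ∈ ℝ^n (i.e., P is a Darboux function with linear cofactor b·x). Then the function I(t) = det(A)·log P(t) − (b · adj(A)) · (log x_1(t), …, log x_n(t)) is constant in t. -/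
/-!
Along the flow, `log P` has derivative `b ⬝ᵥ x` and `log xᵢ` has derivative `(A x)ᵢ`, so for any
weights `c` the function `λ log P - ∑ cᵢ log xᵢ` has derivative `(λ b - c A) ⬝ᵥ x`. The choice
`c = b adj(A)`, `λ = det A` makes `c A = b adj(A) A = det(A) b`, so this derivative vanishes.
-/

open Matrix

theorem Matrix.vecMul_adjugate_vecMul {n R : Type*} [Fintype n] [DecidableEq n] [CommRing R]
    (A : Matrix n n R) (b : n → R) : b ᵥ* A.adjugate ᵥ* A = A.det • b := by
  rw [vecMul_vecMul, adjugate_mul, vecMul_smul, vecMul_one]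

theorem HasDerivAt.log_of_eq_mul {f : ℝ → ℝ} {g t : ℝ} (hf : HasDerivAt f (f t * g) t)
    (hft : f t ≠ 0) : HasDerivAt (fun s => Real.log (f s)) g t := by
  simpa [hft] using hf.log hft

theorem hasDerivAt_sum_mul_log_of_lotkaVolterra {n : Type*} [Fintype n] (A : Matrix n n ℝ)
    {x : ℝ → n → ℝ} {t : ℝ} (hxt : ∀ i, x t i ≠ 0)
    (hx : ∀ i, HasDerivAt (fun s => x s i) (x t i * (A *ᵥ x t) i) t) (c : n → ℝ) :
    HasDerivAt (fun s => ∑ i, c i * Real.log (x s i)) (c ᵥ* A ⬝ᵥ x t) t := by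
  rw [← dotProduct_mulVec]
  exact HasDerivAt.fun_sum fun i _ => ((hx i).log_of_eq_mul (hxt i)).const_mul (c i)

theorem darboux_first_integral_general {n : ℕ} (A : Matrix (Fin n) (Fin n) ℝ)
    (b : Fin n → ℝ)
    (x : ℝ → Fin n → ℝ) (hxpos : ∀ t i, 0 < x t i)
    (hx : ∀ i t, HasDerivAt (fun s => x s i) (x t i * ∑ j, A i j * x t j) t)
    (P : ℝ → ℝ) (hPpos : ∀ t, 0 < P t)
    (hP : ∀ t, HasDerivAt P (P t * ∑ j, b j * x t j) t) :
    ∀ t₁ t₂ : ℝ,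
      A.det * Real.log (P t₁) - ∑ i, Matrix.vecMul b A.adjugate i * Real.log (x t₁ i)
      = A.det * Real.log (P t₂) - ∑ i, Matrix.vecMul b A.adjugate i * Real.log (x t₂ i) := by
  have hI : ∀ t, HasDerivAt (fun s => A.det * Real.log (P s)
      - ∑ i, (b ᵥ* A.adjugate) i * Real.log (x s i)) 0 t := by
    intro t
    have hlogP : HasDerivAt (fun s => Real.log (P s)) (b ⬝ᵥ x t) t :=
      (hP t).log_of_eq_mul (hPpos t).ne'
    have hlogx := hasDerivAt_sum_mul_log_of_lotkaVolterra A (fun i => (hxpos t i).ne')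
      (fun i => hx i t) (b ᵥ* A.adjugate)
    have h := (hlogP.const_mul A.det).sub hlogx
    rwa [vecMul_adjugate_vecMul, smul_dotProduct, smul_eq_mul, sub_self] at h
  intro t₁ t₂
  exact is_const_of_deriv_eq_zero (fun t => (hI t).differentiableAt) (fun t => (hI t).deriv) t₁ t₂

/-- If `det A ≠ 0`, `x` is a positive solution of `x_i' = x_i (A x)_i` and `P > 0`
is a Darboux function with linear cofactor `b·x`, i.e. `P' = P (Σ_j b_j x_j)`, then
`I(t) = det(A)·log P(t) − (b·adj(A))·(log x₁(t), …, log x_n(t))` is constant. -/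
theorem darboux_first_integral {n : ℕ} (A : Matrix (Fin n) (Fin n) ℝ)
    (hA : A.det ≠ 0) (b : Fin n → ℝ)
    (x : ℝ → Fin n → ℝ) (hxpos : ∀ t i, 0 < x t i)
    (hx : ∀ i t, HasDerivAt (fun s => x s i) (x t i * ∑ j, A i j * x t j) t)
    (P : ℝ → ℝ) (hPpos : ∀ t, 0 < P t)
    (hP : ∀ t, HasDerivAt P (P t * ∑ j, b j * x t j) t) :
    ∀ t₁ t₂ : ℝ,
      A.det * Real.log (P t₁) - ∑ i, Matrix.vecMul b A.adjugate i * Real.log (x t₁ i)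
      = A.det * Real.log (P t₂) - ∑ i, Matrix.vecMul b A.adjugate i * Real.log (x t₂ i) :=
  darboux_first_integral_general A b x hxpos hx P hPpos hP
end

section
/- Let T be a tree on vertex set {1,…,n} with edges e_i = (u_i, v_i). Suppose M is an n×n matrix with prescribed values M_{i,i} = a_i, M_{u_i,v_i} = b_i, M_{v_i,u_i} = c_i for each edge e_i, and satisfying the condition M_{u_i,w} = M_{v_i,w} for every edge e_i and every w ∉ {u_i, v_i}. Then M is uniquely determined by these constraints: M_{x,z} for (x,z) not a diagonal entry or an edge of T equals the weight assigned to the last edge of the unique path in T from x to z. -/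
/-!
Along a path `x = v₀ — v₁ — ⋯ — vₖ = z` the target `z` is distinct from every `vᵢ` with `i < k`,
so row agreement gives `M v₀ z = M v₁ z = ⋯ = M vₖ₋₁ z`: every entry off the diagonal is the
entry of its row's penultimate vertex at `z`, i.e. an entry on an edge of the tree. Two matrices
agreeing on the diagonal and on the edges therefore agree everywhere.
-/

namespace SimpleGraph.Walk

variable {V K : Type*} {G : SimpleGraph V} {M : Matrix V V K}

theorem matrix_entry_eq_entry_penultimate
    (hM : ∀ u v, G.Adj u v → ∀ w, w ≠ u → w ≠ v → M u w = M v w)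
    {x z : V} {p : G.Walk x z} (hp : p.IsPath) (hxz : x ≠ z) :
    M x z = M p.penultimate z := by
  induction p with
  | nil => exact absurd rfl hxz
  | @cons x y z hxy q ih =>
    rw [cons_isPath_iff] at hp
    by_cases hyz : y = z
    · subst hyz
      rw [eq_nil_iff_nil.mpr (isPath_iff_nil.mp hp.1)]
      rfl
    · rw [penultimate_cons_of_not_nil _ _ (not_nil_of_ne hyz), ← ih hp.1 hyz]
      exact hM x y hxy z hxz.symm (Ne.symm hyz)

end SimpleGraph.Walk

theorem tree_matrix_unique_general {n : ℕ} {K : Type*}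
    (T : SimpleGraph (Fin n)) (hT : T.IsTree)
    (M M' : Matrix (Fin n) (Fin n) K)
    (hdiag : ∀ i, M i i = M' i i)
    (hedge : ∀ u v, T.Adj u v → M u v = M' u v)
    (hM : ∀ u v, T.Adj u v → ∀ w, w ≠ u → w ≠ v → M u w = M v w)
    (hM' : ∀ u v, T.Adj u v → ∀ w, w ≠ u → w ≠ v → M' u w = M' v w) :
    M = M' ∧
    ∀ (x z : Fin n) (p : T.Walk x z), p.IsPath → x ≠ z →
      M x z = M (p.getVert (p.length - 1)) z := by
  refine ⟨?_, fun x z p hp hxz => p.matrix_entry_eq_entry_penultimate hM hp hxz⟩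
  ext x z
  by_cases hxz : x = z
  · subst hxz
    exact hdiag x
  obtain ⟨p, hp⟩ := (hT.connected x z).some.toPath
  calc M x z = M p.penultimate z := p.matrix_entry_eq_entry_penultimate hM hp hxz
    _ = M' p.penultimate z := hedge _ _ (p.adj_penultimate (SimpleGraph.Walk.not_nil_of_ne hxz))
    _ = M' x z := (p.matrix_entry_eq_entry_penultimate hM' hp hxz).symm

/-- Uniqueness of the matrix associated to a tree: a matrix `M` with prescribed
diagonal entries and prescribed entries on the (directed) edges of a tree `T`,
satisfying the row-agreement condition `M u w = M v w` for every edge `(u,v)` and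
every `w ∉ {u,v}`, is uniquely determined; moreover each off-tree entry `M x z`
equals the entry at the last edge of the unique path from `x` to `z` (i.e. `M y z`
where `y` is the penultimate vertex of that path). -/
theorem tree_matrix_unique {n : ℕ} {K : Type*} [Field K]
    (T : SimpleGraph (Fin n)) (hT : T.IsTree)
    (M M' : Matrix (Fin n) (Fin n) K)
    (hdiag : ∀ i, M i i = M' i i)
    (hedge : ∀ u v, T.Adj u v → M u v = M' u v)
    (hM : ∀ u v, T.Adj u v → ∀ w, w ≠ u → w ≠ v → M u w = M v w)
    (hM' : ∀ u v, T.Adj u v → ∀ w, w ≠ u → w ≠ v → M' u w = M' v w) :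
    M = M' ∧
    ∀ (x z : Fin n) (p : T.Walk x z), p.IsPath → x ≠ z →
      M x z = M (p.getVert (p.length - 1)) z :=
  tree_matrix_unique_general T hT M M' hdiag hedge hM hM'
end

section
/- Let A be an n×n matrix over a field such that for some pair u ≠ v: A_{u,w} = A_{v,w} for all w ∉ {u,v}. Let B be the row vector with B_u = A_{u,u}, B_v = A_{v,v}, and B_w = A_{u,w} for w ∉ {u,v}. Then for every index k ≠ v, the k-th entry of B·adj(A) equals (A_{u,u} − A_{v,u})·(−1)^{k+u}·det(A^{k;u}), and for every k ≠ u it equals (A_{v,v} − A_{u,v})·(−1)^{k+v}·det(A^{k;v}). -/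
/-!
A row vector `B` that agrees with row `v` of `A` except in column `u` is `A v + (B u - A v u) eᵤ`.
Since `A v ᵥ* adj A = (A * adj A) v = det A • eᵥ`, every entry `k ≠ v` of `B ᵥ* adj A` is
`(B u - A v u) * adj A u k`, and `adj A u k` is the signed minor `(-1)^(k+u) det A^{k;u}`.
Under the hypotheses, `B` agrees with row `v` off column `u` and with row `u` off column `v`.
-/

namespace Matrix

variable {R ι : Type*} [CommRing R] [Fintype ι] [DecidableEq ι]

theorem vecMul_adjugate_apply_of_forall_ne_eq_row (A : Matrix ι ι R) {B : ι → R} {u v k : ι}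
    (hB : ∀ w, w ≠ u → B w = A v w) (hk : k ≠ v) :
    (B ᵥ* A.adjugate) k = (B u - A v u) * A.adjugate u k := by
  have hsplit : B = A v + Pi.single u (B u - A v u) := by
    funext w
    rcases eq_or_ne w u with rfl | hw
    · simp
    · simp [hB w hw, Pi.single_eq_of_ne hw]
  have hrow : (A v ᵥ* A.adjugate) k = 0 := by
    rw [← mul_apply_eq_vecMul, mul_adjugate, smul_apply, one_apply_ne hk.symm, smul_zero]
  conv_lhs => rw [hsplit]
  rw [add_vecMul, Pi.add_apply, hrow, single_vecMul, zero_add, Pi.smul_apply, row_apply,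
    smul_eq_mul]

end Matrix

theorem vecMul_adjugate_factorisation_general {K : Type*} [Field K] {n : ℕ}
    (A : Matrix (Fin (n + 1)) (Fin (n + 1)) K) (u v : Fin (n + 1))
    (hrow : ∀ w, w ≠ u → w ≠ v → A u w = A v w)
    (B : Fin (n + 1) → K) (hBu : B u = A u u) (hBv : B v = A v v)
    (hBw : ∀ w, w ≠ u → w ≠ v → B w = A u w) :
    (∀ k, k ≠ v → Matrix.vecMul B A.adjugate k
      = (A u u - A v u) * (-1 : K) ^ ((k : ℕ) + (u : ℕ)) *
        (A.submatrix k.succAbove u.succAbove).det) ∧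
    (∀ k, k ≠ u → Matrix.vecMul B A.adjugate k
      = (A v v - A u v) * (-1 : K) ^ ((k : ℕ) + (v : ℕ)) *
        (A.submatrix k.succAbove v.succAbove).det) := by
  have hBv_row : ∀ w, w ≠ u → B w = A v w := fun w hwu ↦ by
    rcases eq_or_ne w v with rfl | hwv
    · exact hBv
    · exact (hBw w hwu hwv).trans (hrow w hwu hwv)
  have hBu_row : ∀ w, w ≠ v → B w = A u w := fun w hwv ↦ by
    rcases eq_or_ne w u with rfl | hwu
    · exact hBu
    · exact hBw w hwu hwv
  refine ⟨fun k hk ↦ ?_, fun k hk ↦ ?_⟩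
  · rw [Matrix.vecMul_adjugate_apply_of_forall_ne_eq_row A hBv_row hk, hBu,
      Matrix.adjugate_fin_succ_eq_det_submatrix, mul_assoc]
  · rw [Matrix.vecMul_adjugate_apply_of_forall_ne_eq_row A hBu_row hk, hBv,
      Matrix.adjugate_fin_succ_eq_det_submatrix, mul_assoc]

/-- Factorisation of linear combinations of minors: with rows `u ≠ v` of `A`
agreeing outside columns `u, v` and `B` the cofactor-coefficient vector
(`B u = A u u`, `B v = A v v`, `B w = A u w` otherwise), for `k ≠ v` the `k`-th
entry of `B·adj(A)` is `(A u u − A v u)(−1)^{k+u} det A^{k;u}`, and for `k ≠ u`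
it is `(A v v − A u v)(−1)^{k+v} det A^{k;v}`. -/
theorem vecMul_adjugate_factorisation {K : Type*} [Field K] {n : ℕ}
    (A : Matrix (Fin (n + 1)) (Fin (n + 1)) K) (u v : Fin (n + 1)) (huv : u ≠ v)
    (hrow : ∀ w, w ≠ u → w ≠ v → A u w = A v w)
    (B : Fin (n + 1) → K) (hBu : B u = A u u) (hBv : B v = A v v)
    (hBw : ∀ w, w ≠ u → w ≠ v → B w = A u w) :
    (∀ k, k ≠ v → Matrix.vecMul B A.adjugate k
      = (A u u - A v u) * (-1 : K) ^ ((k : ℕ) + (u : ℕ)) *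
        (A.submatrix k.succAbove u.succAbove).det) ∧
    (∀ k, k ≠ u → Matrix.vecMul B A.adjugate k
      = (A v v - A u v) * (-1 : K) ^ ((k : ℕ) + (v : ℕ)) *
        (A.submatrix k.succAbove v.succAbove).det) :=
  vecMul_adjugate_factorisation_general A u v hrow B hBu hBv hBw
end

section
/- Let A be an n×n matrix over a field with rows u,v agreeing outside columns u,v (u<v). If det(A) = 0, then for ALL indices w (including w ∈ {u,v}): (A_{u,u} − A_{v,u})·det(A^{w;u}) = (−1)^{u+v}(A_{v,v} − A_{u,v})·det(A^{w;v}). -/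
/-!
Since `det A = 0`, every row of `A` annihilates every column of `adj A`, so the difference of
rows `u` and `v`, which is supported on the columns `u` and `v`, does too. This is a two-term
linear relation between the cofactors `adj A u w` and `adj A v w`, which are the minors
`det A^{w;u}` and `det A^{w;v}` up to the signs `(-1)^(w+u)` and `(-1)^(w+v)`.
-/

namespace Matrix

variable {R m : Type*} [CommRing R] [Fintype m] [DecidableEq m]

theorem dotProduct_adjugate_col_eq_zero {A : Matrix m m R} (hdet : A.det = 0) (i w : m) :
    A i ⬝ᵥ (fun j ↦ A.adjugate j w) = 0 := by
  simpa [mul_apply, dotProduct, hdet] using congr_fun₂ (A.mul_adjugate) i w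

theorem sub_mul_adjugate_add_sub_mul_adjugate_eq_zero {A : Matrix m m R} {u v : m}
    (hrow : ∀ x, x ≠ u → x ≠ v → A u x = A v x) (hdet : A.det = 0) (w : m) :
    (A u u - A v u) * A.adjugate u w + (A u v - A v v) * A.adjugate v w = 0 := by
  rcases eq_or_ne u v with rfl | huv
  · simp
  have hdiff : (A u - A v) ⬝ᵥ (fun j ↦ A.adjugate j w) = 0 := by
    rw [sub_dotProduct, dotProduct_adjugate_col_eq_zero hdet, dotProduct_adjugate_col_eq_zero hdet,
      sub_zero]
  rw [← hdiff, dotProduct, Fintype.sum_eq_add u v huv fun x ⟨hxu, hxv⟩ ↦ by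
    simp [hrow x hxu hxv]]
  simp

end Matrix

theorem ratio_of_minors_all_rows_of_det_eq_zero_general {K : Type*} [Field K] {n : ℕ}
    (A : Matrix (Fin (n + 1)) (Fin (n + 1)) K) (u v : Fin (n + 1))
    (hrow : ∀ x, x ≠ u → x ≠ v → A u x = A v x) (hdet : A.det = 0) :
    ∀ w : Fin (n + 1), (A u u - A v u) * (A.submatrix w.succAbove u.succAbove).det
      = (-1 : K) ^ ((u : ℕ) + (v : ℕ)) * (A v v - A u v) *
        (A.submatrix w.succAbove v.succAbove).det := by
  intro w
  have hkey := Matrix.sub_mul_adjugate_add_sub_mul_adjugate_eq_zero hrow hdet w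
  simp only [Matrix.adjugate_fin_succ_eq_det_submatrix, pow_add] at hkey
  have hsq (k : ℕ) : ((-1 : K) ^ k) ^ 2 = 1 := by
    rw [← pow_mul, pow_mul', neg_one_sq, one_pow]
  set s := (-1 : K) ^ (w : ℕ)
  set eu := (-1 : K) ^ (u : ℕ)
  set X := (A u u - A v u) * (A.submatrix w.succAbove u.succAbove).det
  set Y := (A v v - A u v) * (A.submatrix w.succAbove v.succAbove).det
  rw [pow_add]
  -- multiply the cofactor relation by the sign `(-1)^(w+u)`
  linear_combination
    s * eu * hkey + (eu * (-1 : K) ^ (v : ℕ) * Y - X * eu ^ 2) * hsq w - X * hsq u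

/-- If `det A = 0` and rows `u < v` of `A` agree outside columns `u, v`, then for
ALL `w` (including `w ∈ {u, v}`):
`(A u u − A v u)·det A^{w;u} = (−1)^{u+v}(A v v − A u v)·det A^{w;v}`. -/
theorem ratio_of_minors_all_rows_of_det_eq_zero {K : Type*} [Field K] {n : ℕ}
    (A : Matrix (Fin (n + 1)) (Fin (n + 1)) K) (u v : Fin (n + 1)) (huv : u < v)
    (hrow : ∀ x, x ≠ u → x ≠ v → A u x = A v x) (hdet : A.det = 0) :
    ∀ w : Fin (n + 1), (A u u - A v u) * (A.submatrix w.succAbove u.succAbove).det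
      = (-1 : K) ^ ((u : ℕ) + (v : ℕ)) * (A v v - A u v) *
        (A.submatrix w.succAbove v.succAbove).det :=
  ratio_of_minors_all_rows_of_det_eq_zero_general A u v hrow hdet
end

section
/- Let A be an n×n matrix over a field with rows u,v agreeing outside columns u,v (u<v). Then (A_{u,u} − A_{v,u})·det(A^{u;u}) − (−1)^{u+v}(A_{v,v} − A_{u,v})·det(A^{u;v}) = det(A), and (A_{u,u} − A_{v,u})·det(A^{v;u}) − (−1)^{u+v}(A_{v,v} − A_{u,v})·det(A^{v;v}) = −(−1)^{u+v}·det(A). -/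
/-!
Replace row `r ∈ {u, v}` of `A` by `A u - A v`. Since rows `u` and `v` agree outside columns
`u, v`, the new row is supported on `{u, v}`, so the Laplace expansion along row `r` has only
the two terms on the left-hand sides. On the other hand, subtracting one row from another does
not change the determinant when `r = u`, and negates it when `r = v`.
-/

namespace Matrix

variable {R : Type*} [CommRing R]

theorem det_updateRow_self_sub {ι : Type*} [Fintype ι] [DecidableEq ι] (A : Matrix ι ι R)
    {i j : ι} (hij : i ≠ j) : (A.updateRow i (A i - A j)).det = A.det := by
  simpa [sub_eq_add_neg] using det_updateRow_add_smul_self A hij (-1)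

theorem det_updateRow_sub_self {ι : Type*} [Fintype ι] [DecidableEq ι] (A : Matrix ι ι R)
    {i j : ι} (hij : i ≠ j) : (A.updateRow j (A i - A j)).det = -A.det := by
  rw [← neg_sub, ← neg_one_smul R (A j - A i), det_updateRow_smul,
    det_updateRow_self_sub A hij.symm, neg_one_mul]

theorem det_updateRow_succ {n : ℕ} (A : Matrix (Fin (n + 1)) (Fin (n + 1)) R)
    (r : Fin (n + 1)) (b : Fin (n + 1) → R) :
    (A.updateRow r b).det =
      ∑ j : Fin (n + 1),
        (-1) ^ ((r : ℕ) + (j : ℕ)) * b j * (A.submatrix r.succAbove j.succAbove).det := by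
  simp_rw [det_succ_row _ r, updateRow_self, submatrix_updateRow_succAbove]

theorem det_updateRow_succ_of_support_pair {n : ℕ} (A : Matrix (Fin (n + 1)) (Fin (n + 1)) R)
    (r : Fin (n + 1)) {b : Fin (n + 1) → R} {u v : Fin (n + 1)} (huv : u ≠ v)
    (hb : ∀ w, w ≠ u → w ≠ v → b w = 0) :
    (A.updateRow r b).det =
      (-1) ^ ((r : ℕ) + u) * b u * (A.submatrix r.succAbove u.succAbove).det +
        (-1) ^ ((r : ℕ) + v) * b v * (A.submatrix r.succAbove v.succAbove).det := by
  rw [det_updateRow_succ, Fintype.sum_eq_add u v huv]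
  rintro w ⟨hwu, hwv⟩
  rw [hb w hwu hwv, mul_zero, zero_mul]

end Matrix

open Matrix in
/-- Linear combinations of minors in the deleted rows `u` and `v` themselves:
`(A u u − A v u)·det A^{u;u} − (−1)^{u+v}(A v v − A u v)·det A^{u;v} = det A` and
`(A u u − A v u)·det A^{v;u} − (−1)^{u+v}(A v v − A u v)·det A^{v;v} = −(−1)^{u+v}·det A`. -/
theorem minors_linear_combination_deleted_rows {K : Type*} [Field K] {n : ℕ}
    (A : Matrix (Fin (n + 1)) (Fin (n + 1)) K) (u v : Fin (n + 1)) (huv : u < v)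
    (hrow : ∀ w, w ≠ u → w ≠ v → A u w = A v w) :
    (A u u - A v u) * (A.submatrix u.succAbove u.succAbove).det
      - (-1 : K) ^ ((u : ℕ) + (v : ℕ)) * (A v v - A u v) *
        (A.submatrix u.succAbove v.succAbove).det = A.det ∧
    (A u u - A v u) * (A.submatrix v.succAbove u.succAbove).det
      - (-1 : K) ^ ((u : ℕ) + (v : ℕ)) * (A v v - A u v) *
        (A.submatrix v.succAbove v.succAbove).det
      = -(-1 : K) ^ ((u : ℕ) + (v : ℕ)) * A.det := by
  have hsupp : ∀ w, w ≠ u → w ≠ v → (A u - A v) w = 0 := fun w hwu hwv =>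
    sub_eq_zero.2 (hrow w hwu hwv)
  have hexpand_u := det_updateRow_self_sub A huv.ne
  have hexpand_v := det_updateRow_sub_self A huv.ne
  rw [det_updateRow_succ_of_support_pair A _ huv.ne hsupp] at hexpand_u hexpand_v
  rw [(Even.add_self (u : ℕ)).neg_one_pow] at hexpand_u
  rw [(Even.add_self (v : ℕ)).neg_one_pow, add_comm (v : ℕ)] at hexpand_v
  have hsign_sq : (-1 : K) ^ ((u : ℕ) + v) * (-1) ^ ((u : ℕ) + v) = 1 := by
    rw [← mul_pow, neg_one_mul, neg_neg, one_pow]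
  simp only [Pi.sub_apply] at hexpand_u hexpand_v
  constructor
  · linear_combination hexpand_u
  · linear_combination (-1 : K) ^ ((u : ℕ) + v) * hexpand_v
      - (A u u - A v u) * (A.submatrix v.succAbove u.succAbove).det * hsign_sq
end

section
/- Let x : I → (ℝ_{>0})² be differentiable with x₁' = x₁(a₁x₁ + b x₂) and x₂' = x₂(c x₁ + a₂ x₂), where a₁ ≠ c and a₂ ≠ b. Then P := (c − a₁)x₁ + (a₂ − b)x₂ satisfies P' = P·(a₁x₁ + a₂x₂), and the function t ↦ P(t)^{a₁a₂ − bc} · x₁(t)^{−a₂(a₁ − c)} · x₂(t)^{−a₁(a₂ − b)} is constant on I (an explicit first integral of the 2-dimensional tree-system). -/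
/-!
`P' = P·L` and `(x₁^β x₂^γ)' = -α·(x₁^β x₂^γ)·L` for `L = a₁x₁ + a₂x₂`, `α = a₁a₂ − bc`,
`β = −a₂(a₁ − c)`, `γ = −a₁(a₂ − b)`, so `P^α · x₁^β x₂^γ` has zero logarithmic derivative.
Since `P` may vanish or change sign, the argument for `α ≠ 0` goes through the `α`-th root:
`P · (x₁^β x₂^γ)^{1/α}` has zero derivative, and raising it to the power `α` is harmless
because its second factor is positive.
-/

open Real

theorem Set.OrdConnected.eq_of_hasDerivAt_zero {I : Set ℝ} (hI : I.OrdConnected) {f : ℝ → ℝ}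
    (hf : ∀ t ∈ I, HasDerivAt f 0 t) {t s : ℝ} (ht : t ∈ I) (hs : s ∈ I) : f t = f s := by
  have h := hI.convex.norm_image_sub_le_of_norm_hasDerivWithin_le (C := 0)
    (fun x hx => (hf x hx).hasDerivWithinAt) (fun _ _ => by simp) hs ht
  simpa [sub_eq_zero] using h

theorem Real.mul_rpow_of_pos_right {x y : ℝ} (hy : 0 < y) (z : ℝ) :
    (x * y) ^ z = x ^ z * y ^ z := by
  rcases le_or_gt 0 x with hx | hx
  · exact mul_rpow hx hy.le
  · rw [rpow_def_of_neg (mul_neg_of_neg_of_pos hx hy), rpow_def_of_neg hx, rpow_def_of_pos hy,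
      log_mul hx.ne hy.ne', add_mul, exp_add]
    ring

section LogDeriv

variable {f g : ℝ → ℝ} {φ ψ t : ℝ}

theorem HasDerivAt.mul_of_logDeriv (hf : HasDerivAt f (f t * φ) t)
    (hg : HasDerivAt g (g t * ψ) t) :
    HasDerivAt (fun s => f s * g s) (f t * g t * (φ + ψ)) t :=
  (hf.mul hg).congr_deriv (by ring)

theorem HasDerivAt.rpow_const_of_logDeriv (hf : HasDerivAt f (f t * φ) t) (hpos : 0 < f t)
    (p : ℝ) : HasDerivAt (fun s => f s ^ p) (f t ^ p * (p * φ)) t := by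
  refine (hf.rpow_const (p := p) (Or.inl hpos.ne')).congr_deriv ?_
  rw [rpow_sub_one hpos.ne']
  field_simp

end LogDeriv

theorem rpow_mul_eq_of_logDeriv {I : Set ℝ} (hI : I.OrdConnected) {P Q L : ℝ → ℝ} (α : ℝ)
    (hQpos : ∀ t ∈ I, 0 < Q t) (hP : ∀ t ∈ I, HasDerivAt P (P t * L t) t)
    (hQ : ∀ t ∈ I, HasDerivAt Q (Q t * (-α * L t)) t) {t s : ℝ} (ht : t ∈ I) (hs : s ∈ I) :
    P t ^ α * Q t = P s ^ α * Q s := by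
  rcases eq_or_ne α 0 with rfl | hα
  · simp only [rpow_zero, one_mul]
    exact hI.eq_of_hasDerivAt_zero (fun r hr => (hQ r hr).congr_deriv (by ring)) ht hs
  have hroot : ∀ r ∈ I, HasDerivAt (fun s => P s * Q s ^ α⁻¹) 0 r := fun r hr =>
    ((hP r hr).mul_of_logDeriv ((hQ r hr).rpow_const_of_logDeriv (hQpos r hr) α⁻¹)).congr_deriv
      (by field_simp; ring)
  have hpow : ∀ r ∈ I, (P r * Q r ^ α⁻¹) ^ α = P r ^ α * Q r := fun r hr => by
    rw [mul_rpow_of_pos_right (rpow_pos_of_pos (hQpos r hr) _), ← rpow_mul (hQpos r hr).le,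
      inv_mul_cancel₀ hα, rpow_one]
  rw [← hpow t ht, ← hpow s hs, hI.eq_of_hasDerivAt_zero hroot ht hs]

theorem two_dim_tree_system_integral_general {I : Set ℝ} (hI : I.OrdConnected)
    (a₁ a₂ b c : ℝ)
    (x₁ x₂ : ℝ → ℝ) (hpos₁ : ∀ t ∈ I, 0 < x₁ t) (hpos₂ : ∀ t ∈ I, 0 < x₂ t)
    (hx₁ : ∀ t ∈ I, HasDerivAt x₁ (x₁ t * (a₁ * x₁ t + b * x₂ t)) t)
    (hx₂ : ∀ t ∈ I, HasDerivAt x₂ (x₂ t * (c * x₁ t + a₂ * x₂ t)) t) :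
    (∀ t ∈ I, HasDerivAt (fun s => (c - a₁) * x₁ s + (a₂ - b) * x₂ s)
      (((c - a₁) * x₁ t + (a₂ - b) * x₂ t) * (a₁ * x₁ t + a₂ * x₂ t)) t) ∧
    (∀ t ∈ I, ∀ s ∈ I,
      ((c - a₁) * x₁ t + (a₂ - b) * x₂ t) ^ (a₁ * a₂ - b * c) *
        x₁ t ^ (-(a₂ * (a₁ - c))) * x₂ t ^ (-(a₁ * (a₂ - b)))
      = ((c - a₁) * x₁ s + (a₂ - b) * x₂ s) ^ (a₁ * a₂ - b * c) *
        x₁ s ^ (-(a₂ * (a₁ - c))) * x₂ s ^ (-(a₁ * (a₂ - b)))) := by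
  have hP : ∀ t ∈ I, HasDerivAt (fun s => (c - a₁) * x₁ s + (a₂ - b) * x₂ s)
      (((c - a₁) * x₁ t + (a₂ - b) * x₂ t) * (a₁ * x₁ t + a₂ * x₂ t)) t := fun t ht =>
    (((hx₁ t ht).const_mul (c - a₁)).add ((hx₂ t ht).const_mul (a₂ - b))).congr_deriv (by ring)
  have hQ : ∀ t ∈ I, HasDerivAt (fun s => x₁ s ^ (-(a₂ * (a₁ - c))) * x₂ s ^ (-(a₁ * (a₂ - b))))
      (x₁ t ^ (-(a₂ * (a₁ - c))) * x₂ t ^ (-(a₁ * (a₂ - b))) *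
        (-(a₁ * a₂ - b * c) * (a₁ * x₁ t + a₂ * x₂ t))) t := fun t ht =>
    (((hx₁ t ht).rpow_const_of_logDeriv (hpos₁ t ht) _).mul_of_logDeriv
      ((hx₂ t ht).rpow_const_of_logDeriv (hpos₂ t ht) _)).congr_deriv (by ring)
  refine ⟨hP, fun t ht s hs => ?_⟩
  simpa only [mul_assoc] using rpow_mul_eq_of_logDeriv hI _
    (fun r hr => mul_pos (rpow_pos_of_pos (hpos₁ r hr) _) (rpow_pos_of_pos (hpos₂ r hr) _))
    hP hQ ht hs

/-- Explicit first integral of the 2-dimensional tree-system: if `x₁, x₂ > 0` solve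
`x₁' = x₁(a₁x₁ + b x₂)`, `x₂' = x₂(c x₁ + a₂x₂)` with `a₁ ≠ c`, `a₂ ≠ b`, then
`P = (c − a₁)x₁ + (a₂ − b)x₂` satisfies `P' = P(a₁x₁ + a₂x₂)` and
`P^{a₁a₂ − bc} · x₁^{−a₂(a₁−c)} · x₂^{−a₁(a₂−b)}` is constant on `I`. -/
theorem two_dim_tree_system_integral {I : Set ℝ} (hI : I.OrdConnected)
    (a₁ a₂ b c : ℝ) (h₁ : a₁ ≠ c) (h₂ : a₂ ≠ b)
    (x₁ x₂ : ℝ → ℝ) (hpos₁ : ∀ t ∈ I, 0 < x₁ t) (hpos₂ : ∀ t ∈ I, 0 < x₂ t)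
    (hx₁ : ∀ t ∈ I, HasDerivAt x₁ (x₁ t * (a₁ * x₁ t + b * x₂ t)) t)
    (hx₂ : ∀ t ∈ I, HasDerivAt x₂ (x₂ t * (c * x₁ t + a₂ * x₂ t)) t) :
    (∀ t ∈ I, HasDerivAt (fun s => (c - a₁) * x₁ s + (a₂ - b) * x₂ s)
      (((c - a₁) * x₁ t + (a₂ - b) * x₂ t) * (a₁ * x₁ t + a₂ * x₂ t)) t) ∧
    (∀ t ∈ I, ∀ s ∈ I,
      ((c - a₁) * x₁ t + (a₂ - b) * x₂ t) ^ (a₁ * a₂ - b * c) *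
        x₁ t ^ (-(a₂ * (a₁ - c))) * x₂ t ^ (-(a₁ * (a₂ - b)))
      = ((c - a₁) * x₁ s + (a₂ - b) * x₂ s) ^ (a₁ * a₂ - b * c) *
        x₁ s ^ (-(a₂ * (a₁ - c))) * x₂ s ^ (-(a₁ * (a₂ - b)))) :=
  two_dim_tree_system_integral_general hI a₁ a₂ b c x₁ x₂ hpos₁ hpos₂ hx₁ hx₂
end
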